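/- Let ρ : (0,1] → ℝ be a nonnegative measurable function with r ↦ r ρ(r) integrable on (0,1), let r* ∈ (0,1] be such that the map r ↦ r ρ(r) is nondecreasing on (0, r*], and let s > 0 satisfy r* s ≥ π/√2. Then ∫₀^{r*} r ρ(r) cos(s r) dr ≤ max{ ∫₀^{r*/√2} r ρ(r) dr , ∫_{(3/7)r*}^{r*} r ρ(r) dr }. -/

import Mathlib

open Real MeasureTheory intervalIntegral

set_option maxHeartbeats 1000000 in
theorem aux_main (f : ℝ → ℝ) (hf0 : f 0 = 0)
    (hfnn : ∀ r ∈ Set.Icc (0:ℝ) 1, 0 ≤ f r)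
    (hint : IntervalIntegrable f volume 0 1)
    (rs : ℝ) (hrs0 : 0 < rs) (hrs1 : rs ≤ 1)
    (hmono : MonotoneOn f (Set.Ioc (0:ℝ) rs))
    (s : ℝ) (hs : 0 < s) (hrss : π / Real.sqrt 2 ≤ rs * s) :
    (∫ r in (0:ℝ)..rs, f r * Real.cos (s * r))
      ≤ max (∫ r in (0:ℝ)..(rs / Real.sqrt 2), f r)
            (∫ r in ((3 / 7) * rs)..rs, f r) := by
  have hpi := Real.pi_pos
  have hsqrt2 : (1:ℝ) ≤ Real.sqrt 2 := by
    rw [show (1:ℝ) = Real.sqrt 1 from (Real.sqrt_one).symm]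
    exact Real.sqrt_le_sqrt (by norm_num)
  have hsqrt2pos : (0:ℝ) < Real.sqrt 2 := by linarith
  have hsq2 : Real.sqrt 2 * Real.sqrt 2 = 2 := Real.mul_self_sqrt (by norm_num)
  have huIcc : Set.uIcc (0:ℝ) 1 = Set.Icc 0 1 := Set.uIcc_of_le (by norm_num)
  have hfi : ∀ a b : ℝ, a ∈ Set.Icc (0:ℝ) 1 → b ∈ Set.Icc (0:ℝ) 1 →
      IntervalIntegrable f volume a b := fun a b ha hb =>
    hint.mono_set (Set.uIcc_subset_uIcc (by rw [huIcc]; exact ha) (by rw [huIcc]; exact hb))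
  have hcosc : Continuous fun r : ℝ => Real.cos (s * r) := by fun_prop
  have hgi : ∀ a b : ℝ, a ∈ Set.Icc (0:ℝ) 1 → b ∈ Set.Icc (0:ℝ) 1 →
      IntervalIntegrable (fun r => f r * Real.cos (s * r)) volume a b := fun a b ha hb =>
    (hfi a b ha hb).mul_continuousOn hcosc.continuousOn
  have h0mem : (0:ℝ) ∈ Set.Icc (0:ℝ) 1 := by norm_num
  have hrsmem : rs ∈ Set.Icc (0:ℝ) 1 := ⟨hrs0.le, hrs1⟩
  have hπs : (π/s)*s = π := div_mul_cancel₀ π hs.ne'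
  have hTpos : 0 < π/s := div_pos hpi hs
  rcases le_or_gt (rs * s) (π + π/2) with h1 | h1
  · -- Case 1 : cos ≤ 0 on [π/(2s), rs]
    have hc0 : 0 < π/(2*s) := div_pos hpi (by linarith)
    have hcrs2 : π/(2*s) ≤ rs / Real.sqrt 2 := by
      rw [div_le_div_iff₀ (by linarith) hsqrt2pos]
      nlinarith [mul_le_mul_of_nonneg_right ((div_le_iff₀ hsqrt2pos).mp hrss) hsqrt2pos.le]
    have hrs2rs : rs / Real.sqrt 2 ≤ rs := by
      rw [div_le_iff₀ hsqrt2pos]; nlinarith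
    have hcrs : π/(2*s) ≤ rs := hcrs2.trans hrs2rs
    have hrs2mem : rs / Real.sqrt 2 ∈ Set.Icc (0:ℝ) 1 := ⟨by positivity, hrs2rs.trans hrs1⟩
    have hcmem : π/(2*s) ∈ Set.Icc (0:ℝ) 1 := ⟨hc0.le, hcrs.trans hrs1⟩
    have hsplit := integral_add_adjacent_intervals (hgi 0 (π/(2*s)) h0mem hcmem)
      (hgi (π/(2*s)) rs hcmem hrsmem)
    have htail : (∫ r in (π/(2*s))..rs, f r * Real.cos (s * r)) ≤ 0 := by
      have h := intervalIntegral.integral_nonneg (μ := volume) (f := fun r => -(f r * Real.cos (s*r))) hcrs ?_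
      · rw [intervalIntegral.integral_neg] at h; linarith
      · intro u hu
        have h1u : π/2 ≤ s * u := by
          have : s * (π/(2*s)) = π/2 := by field_simp
          nlinarith [hu.1]
        have h2u : s * u ≤ π + π/2 := by nlinarith [hu.2]
        have hcu := Real.cos_nonpos_of_pi_div_two_le_of_le h1u h2u
        have hfu : 0 ≤ f u := hfnn u ⟨hc0.le.trans hu.1, hu.2.trans hrs1⟩
        simp only [neg_nonneg]
        exact mul_nonpos_of_nonneg_of_nonpos hfu hcu
    have hhead : (∫ r in (0:ℝ)..(π/(2*s)), f r * Real.cos (s * r))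
        ≤ ∫ r in (0:ℝ)..(π/(2*s)), f r :=
      intervalIntegral.integral_mono_on hc0.le (hgi 0 (π/(2*s)) h0mem hcmem)
        (hfi 0 (π/(2*s)) h0mem hcmem)
        (fun u hu => mul_le_of_le_one_right (hfnn u ⟨hu.1, hu.2.trans hcmem.2⟩) (Real.cos_le_one _))
    have hext : (∫ r in (0:ℝ)..(π/(2*s)), f r) ≤ ∫ r in (0:ℝ)..(rs / Real.sqrt 2), f r := by
      rw [← integral_add_adjacent_intervals (hfi 0 (π/(2*s)) h0mem hcmem)
        (hfi (π/(2*s)) _ hcmem hrs2mem)]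
      have h := intervalIntegral.integral_nonneg (μ := volume) (f := f) hcrs2
        (fun u hu => hfnn u ⟨hc0.le.trans hu.1, hu.2.trans hrs2mem.2⟩)
      linarith
    have := le_max_left (∫ r in (0:ℝ)..(rs / Real.sqrt 2), f r) (∫ r in ((3/7)*rs)..rs, f r)
    linarith [hsplit]
  · -- Case 2
    have hrsT : (3/2) * (π/s) < rs := by
      rw [show (3:ℝ)/2 * (π/s) = (π + π/2)/s by ring, div_lt_iff₀ hs]
      nlinarith
    -- pair lemma
    have pair : ∀ p : ℝ, 0 < p → p + 2*(π/s) ≤ rs →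
        (∀ r ∈ Set.Icc p (p + π/s), 0 ≤ Real.cos (s * r)) →
        (∫ r in p..(p + 2*(π/s)), f r * Real.cos (s * r)) ≤ 0 := by
      intro p hp hprs hcos
      have hpTmem : p + π/s ∈ Set.Icc (0:ℝ) 1 := ⟨by linarith, by linarith⟩
      have hpmem : p ∈ Set.Icc (0:ℝ) 1 := ⟨hp.le, by linarith⟩
      have hp2Tmem : p + 2*(π/s) ∈ Set.Icc (0:ℝ) 1 := ⟨by linarith, by linarith⟩
      have hshift : IntervalIntegrable (fun r => f (r + π/s)) volume p (p + π/s) := by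
        have h := (hfi (p + π/s) (p + 2*(π/s)) hpTmem hp2Tmem).comp_add_right (π/s)
        rwa [show p + π/s - π/s = p by ring, show p + 2*(π/s) - π/s = p + π/s by ring] at h
      have hshiftcos : IntervalIntegrable (fun r => f (r + π/s) * Real.cos (s * r)) volume
          p (p + π/s) := hshift.mul_continuousOn hcosc.continuousOn
      have key1 : (∫ r in p..(p + π/s), f r * Real.cos (s * r))
          ≤ ∫ r in p..(p + π/s), f (r + π/s) * Real.cos (s * r) := by
        apply intervalIntegral.integral_mono_on (by linarith) (hgi p (p + π/s) hpmem hpTmem)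
          hshiftcos
        intro u hu
        have hc := hcos u hu
        have hmle : f u ≤ f (u + π/s) :=
          hmono ⟨lt_of_lt_of_le hp hu.1, by linarith [hu.2]⟩
            ⟨by linarith [hu.1], by linarith [hu.2]⟩ (by linarith)
        exact mul_le_mul_of_nonneg_right hmle hc
      have key2 : (∫ r in (p + π/s)..(p + 2*(π/s)), f r * Real.cos (s * r))
          = - ∫ r in p..(p + π/s), f (r + π/s) * Real.cos (s * r) := by
        rw [show p + 2*(π/s) = p + π/s + π/s by ring,
          ← intervalIntegral.integral_comp_add_right (fun x => f x * Real.cos (s * x)) (π/s),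
          ← intervalIntegral.integral_neg]
        apply intervalIntegral.integral_congr
        intro r _
        simp only
        rw [show s * (r + π/s) = s * r + π by first | (field_simp; ring) | field_simp, Real.cos_add_pi]
        ring
      have hsplit := integral_add_adjacent_intervals (hgi p (p + π/s) hpmem hpTmem)
        (hgi (p + π/s) (p + 2*(π/s)) hpTmem hp2Tmem)
      rw [← hsplit, key2]; linarith
    -- first wave
    have hTmem : π/s ∈ Set.Icc (0:ℝ) 1 := ⟨hTpos.le, by linarith⟩
    have hT2mem : π/s/2 ∈ Set.Icc (0:ℝ) 1 := ⟨by positivity, by linarith [hTmem.2, hTpos]⟩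
    have first : (∫ r in (0:ℝ)..(π/s), f r * Real.cos (s * r)) ≤ 0 := by
      have hrefl : IntervalIntegrable (fun r => f (π/s - r)) volume 0 (π/s/2) := by
        have h := (hfi (π/s/2) (π/s) hT2mem hTmem).comp_sub_left (π/s)
        rw [show π/s - π/s/2 = π/s/2 by ring, sub_self] at h
        exact h.symm
      have hreflcos : IntervalIntegrable (fun r => f (π/s - r) * Real.cos (s * r)) volume
          0 (π/s/2) := hrefl.mul_continuousOn hcosc.continuousOn
      have key2' : (∫ r in (π/s/2)..(π/s), f r * Real.cos (s * r))
          = - ∫ r in (0:ℝ)..(π/s/2), f (π/s - r) * Real.cos (s * r) := by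
        have h := intervalIntegral.integral_comp_sub_left
          (a := (0:ℝ)) (b := π/s/2) (fun x => f x * Real.cos (s * x)) (π/s)
        rw [show π/s - π/s/2 = π/s/2 by ring, sub_zero] at h
        rw [← h, ← intervalIntegral.integral_neg]
        apply intervalIntegral.integral_congr
        intro r _
        simp only
        rw [show s * (π/s - r) = π - s * r by first | (field_simp; ring) | field_simp, Real.cos_pi_sub]
        ring
      have key1' : (∫ r in (0:ℝ)..(π/s/2), f r * Real.cos (s * r))
          ≤ ∫ r in (0:ℝ)..(π/s/2), f (π/s - r) * Real.cos (s * r) := by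
        apply intervalIntegral.integral_mono_on (by positivity) (hgi 0 (π/s/2) h0mem hT2mem)
          hreflcos
        intro u hu
        have hcu : 0 ≤ Real.cos (s * u) := by
          apply Real.cos_nonneg_of_mem_Icc
          constructor
          · nlinarith [hu.1]
          · have : s * (π/s/2) = π/2 := by field_simp
            nlinarith [hu.2]
        have hfle : f u ≤ f (π/s - u) := by
          rcases eq_or_lt_of_le hu.1 with h | h
          · rw [← h, hf0, sub_zero]
            exact hfnn _ hTmem
          · exact hmono ⟨h, by nlinarith [hu.2]⟩
              ⟨by nlinarith [hu.2], by nlinarith [hu.1]⟩ (by nlinarith [hu.2])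
        exact mul_le_mul_of_nonneg_right hfle hcu
      have hsplit := integral_add_adjacent_intervals (hgi 0 (π/s/2) h0mem hT2mem)
        (hgi (π/s/2) (π/s) hT2mem hTmem)
      rw [← hsplit, key2']; linarith
    -- base : up to (3/2)T
    have h32mem : (3/2)*(π/s) ∈ Set.Icc (0:ℝ) 1 := ⟨by positivity, by linarith⟩
    have base : (∫ r in (0:ℝ)..((3/2)*(π/s)), f r * Real.cos (s * r)) ≤ 0 := by
      have h2 : (∫ r in (π/s)..((3/2)*(π/s)), f r * Real.cos (s * r)) ≤ 0 := by
        have h := intervalIntegral.integral_nonneg (μ := volume) (f := fun r => -(f r * Real.cos (s*r))) (by linarith : π/s ≤ (3/2)*(π/s)) ?_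
        · rw [intervalIntegral.integral_neg] at h; linarith
        · intro u hu
          have h1u : π/2 ≤ s * u := by nlinarith [hu.1]
          have h2u : s * u ≤ π + π/2 := by nlinarith [hu.2]
          have hcu := Real.cos_nonpos_of_pi_div_two_le_of_le h1u h2u
          have hfu : 0 ≤ f u := hfnn u ⟨hTpos.le.trans hu.1, hu.2.trans h32mem.2⟩
          simp only [neg_nonneg]
          exact mul_nonpos_of_nonneg_of_nonpos hfu hcu
      have hsplit := integral_add_adjacent_intervals (hgi 0 (π/s) h0mem hTmem)
        (hgi (π/s) ((3/2)*(π/s)) hTmem h32mem)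
      rw [← hsplit]; linarith
    -- induction
    have main : ∀ k : ℕ, (2*(k:ℝ) + 3/2) * (π/s) ≤ rs →
        (∫ r in (0:ℝ)..((2*(k:ℝ) + 3/2) * (π/s)), f r * Real.cos (s * r)) ≤ 0 := by
      intro k
      induction k with
      | zero =>
        intro _
        rw [show (2*((0:ℕ):ℝ) + 3/2) * (π/s) = (3/2)*(π/s) by norm_num]
        exact base
      | succ k ih =>
        intro hk
        rw [show ((k+1:ℕ):ℝ) = (k:ℝ)+1 by push_cast; ring] at hk ⊢
        have hk' : (2*(k:ℝ) + 3/2) * (π/s) ≤ rs := by nlinarith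
        have hp0 : 0 < (2*(k:ℝ) + 3/2) * (π/s) := by positivity
        have hprs : (2*(k:ℝ) + 3/2) * (π/s) + 2*(π/s) ≤ rs := by nlinarith
        have hpmem : (2*(k:ℝ) + 3/2) * (π/s) ∈ Set.Icc (0:ℝ) 1 := ⟨hp0.le, by linarith⟩
        have hp2mem : (2*(k:ℝ) + 3/2) * (π/s) + 2*(π/s) ∈ Set.Icc (0:ℝ) 1 :=
          ⟨by positivity, by linarith⟩
        have hcosp : ∀ r ∈ Set.Icc ((2*(k:ℝ) + 3/2) * (π/s)) ((2*(k:ℝ) + 3/2) * (π/s) + π/s),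
            0 ≤ Real.cos (s * r) := by
          intro r hr
          have hsp : s * ((2*(k:ℝ) + 3/2) * (π/s)) = (2*(k:ℝ) + 3/2) * π := by
            field_simp
          have hb1 : (2*(k:ℝ) + 3/2) * π ≤ s * r := by
            calc (2*(k:ℝ) + 3/2) * π = s * ((2*(k:ℝ) + 3/2) * (π/s)) := hsp.symm
              _ ≤ s * r := by nlinarith [hr.1]
          have hb2 : s * r ≤ (2*(k:ℝ) + 5/2) * π := by
            have : s * ((2*(k:ℝ) + 3/2) * (π/s) + π/s) = (2*(k:ℝ) + 5/2) * π := by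
              field_simp; ring
            nlinarith [hr.2]
          have hcoseq : Real.cos (s * r) = Real.cos (s * r - (((k:ℤ)+1):ℝ) * (2*π)) := by
            rw [← Real.cos_add_int_mul_two_pi (s * r - (((k:ℤ)+1):ℝ) * (2*π)) ((k:ℤ)+1)]
            norm_num
          rw [hcoseq]
          apply Real.cos_nonneg_of_mem_Icc
          constructor <;> push_cast <;> [linarith; linarith]
        have e : (2*((k:ℝ)+1) + 3/2) * (π/s)
            = (2*(k:ℝ) + 3/2) * (π/s) + 2*(π/s) := by ring
        rw [e, ← integral_add_adjacent_intervals (hgi 0 _ h0mem hpmem)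
          (hgi _ _ hpmem hp2mem)]
        have hpair := pair ((2*(k:ℝ) + 3/2) * (π/s)) hp0 hprs hcosp
        have := ih hk'
        linarith
    -- choose k
    obtain ⟨k, hk1, hk2⟩ : ∃ k : ℕ, (2*(k:ℝ)+3/2)*(π/s) ≤ rs ∧
        rs < (2*(k:ℝ)+3/2)*(π/s) + 2*(π/s) := by
      refine ⟨⌊(rs*s/π - 3/2)/2⌋₊, ?_, ?_⟩
      · have h := Nat.floor_le (R := ℝ) (a := (rs*s/π - 3/2)/2) (by
          have : (3:ℝ)/2 < rs*s/π := by rw [lt_div_iff₀ hpi]; nlinarith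
          linarith)
        rw [← mul_le_mul_iff_left₀ hs]
        calc (2*(⌊(rs*s/π - 3/2)/2⌋₊:ℝ)+3/2)*(π/s)*s = (2*(⌊(rs*s/π - 3/2)/2⌋₊:ℝ)+3/2)*π := by
              rw [mul_assoc, hπs]
          _ ≤ (rs*s/π)*π := by nlinarith [hpi]
          _ = rs*s := div_mul_cancel₀ _ hpi.ne'
      · have h := Nat.lt_floor_add_one ((rs*s/π - 3/2)/2)
        rw [← mul_lt_mul_iff_left₀ hs]
        have e : ((2*(⌊(rs*s/π - 3/2)/2⌋₊:ℝ)+3/2)*(π/s) + 2*(π/s))*s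
            = (2*(⌊(rs*s/π - 3/2)/2⌋₊:ℝ)+3/2+2)*π := by
          field_simp
        rw [e]
        calc rs*s = (rs*s/π)*π := (div_mul_cancel₀ _ hpi.ne').symm
          _ < (2*(⌊(rs*s/π - 3/2)/2⌋₊:ℝ)+3/2+2)*π := by nlinarith [hpi]
    have ha0 : 0 < (2*(k:ℝ)+3/2)*(π/s) := by positivity
    have h32a : (3/2)*(π/s) ≤ (2*(k:ℝ)+3/2)*(π/s) := by
      nlinarith [hTpos, Nat.cast_nonneg (α := ℝ) k]
    have ha37 : (3/7)*rs ≤ (2*(k:ℝ)+3/2)*(π/s) := by nlinarith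
    have hamem : (2*(k:ℝ)+3/2)*(π/s) ∈ Set.Icc (0:ℝ) 1 := ⟨ha0.le, hk1.trans hrs1⟩
    have h37mem : (3/7)*rs ∈ Set.Icc (0:ℝ) 1 := ⟨by positivity, by nlinarith⟩
    have hfin1 : (∫ r in ((2*(k:ℝ)+3/2)*(π/s))..rs, f r * Real.cos (s * r))
        ≤ ∫ r in ((2*(k:ℝ)+3/2)*(π/s))..rs, f r :=
      intervalIntegral.integral_mono_on hk1 (hgi _ rs hamem hrsmem) (hfi _ rs hamem hrsmem)
        (fun u hu => mul_le_of_le_one_right (hfnn u ⟨ha0.le.trans hu.1, hu.2.trans hrs1⟩)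
          (Real.cos_le_one _))
    have hfin2 := integral_add_adjacent_intervals (hfi ((3/7)*rs) _ h37mem hamem)
      (hfi _ rs hamem hrsmem)
    have hfin3 : 0 ≤ ∫ r in ((3/7)*rs)..((2*(k:ℝ)+3/2)*(π/s)), f r :=
      intervalIntegral.integral_nonneg (μ := volume) ha37
        (fun u hu => hfnn u ⟨h37mem.1.trans hu.1, hu.2.trans hamem.2⟩)
    have hsplit := integral_add_adjacent_intervals (hgi 0 _ h0mem hamem)
      (hgi _ rs hamem hrsmem)
    have h0a := main k hk1
    have := le_max_right (∫ r in (0:ℝ)..(rs / Real.sqrt 2), f r) (∫ r in ((3/7)*rs)..rs, f r)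
    linarith

theorem integral_r_rho_cos_le_max (ρ : ℝ → ℝ) (hmeas : Measurable ρ)
    (hnonneg : ∀ r ∈ Set.Ioc (0:ℝ) 1, 0 ≤ ρ r)
    (hint : IntervalIntegrable (fun r => r * ρ r) volume 0 1)
    (rs : ℝ) (hrs : rs ∈ Set.Ioc (0:ℝ) 1)
    (hmono : MonotoneOn (fun r => r * ρ r) (Set.Ioc (0:ℝ) rs))
    (s : ℝ) (hs : 0 < s) (hrss : π / Real.sqrt 2 ≤ rs * s) :
    (∫ r in (0:ℝ)..rs, r * ρ r * Real.cos (s * r))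
      ≤ max (∫ r in (0:ℝ)..(rs / Real.sqrt 2), r * ρ r)
            (∫ r in ((3 / 7) * rs)..rs, r * ρ r) := by
  have hfnn : ∀ r ∈ Set.Icc (0:ℝ) 1, 0 ≤ r * ρ r := by
    intro r hr
    rcases eq_or_lt_of_le hr.1 with h | h
    · simp [← h]
    · exact mul_nonneg h.le (hnonneg r ⟨h, hr.2⟩)
  exact aux_main (fun r => r * ρ r) (by simp) hfnn hint rs hrs.1 hrs.2 hmono s hs hrss
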